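/- Let H₁ and H₂ be real inner product spaces, let T : H₁ → H₂ be a bounded (continuous) linear operator with operator norm ‖T‖, and let x₁, …, x_k ∈ H₁. Then det G(Tx₁, …, Tx_k) ≤ ‖T‖^{2k} · det G(x₁, …, x_k), where G(y₁, …, y_k) denotes the k×k Gram matrix with (i,j) entry ⟨y_i, y_j⟩. -/

import Mathlib

open Matrix

/-- Gram matrix of a finite family of vectors in a real inner product space. -/
noncomputable def gramMatrix {H : Type*} [NormedAddCommGroup H] [InnerProductSpace ℝ H]
    {k : ℕ} (x : Fin k → H) : Matrix (Fin k) (Fin k) ℝ :=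
  Matrix.of fun i j => inner ℝ (x i) (x j)

section Aux

variable {n : Type*} [Fintype n] [DecidableEq n]

open scoped MatrixOrder

lemma psd_det_nonneg {A : Matrix n n ℝ} (hA : A.PosSemidef) : 0 ≤ A.det := by
  rw [hA.isHermitian.det_eq_prod_eigenvalues]
  exact Finset.prod_nonneg fun i _ => by simpa using hA.eigenvalues_nonneg i

lemma one_le_det_one_add {Q : Matrix n n ℝ} (hQ : Q.PosSemidef) : 1 ≤ (1 + Q).det := by
  have hH := hQ.isHermitian
  have h1 : (1 : Matrix n n ℝ) + Q =
      (hH.eigenvectorUnitary : Matrix n n ℝ) *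
        (1 + diagonal (RCLike.ofReal ∘ hH.eigenvalues)) *
        star (hH.eigenvectorUnitary : Matrix n n ℝ) := by
    rw [mul_add, add_mul]
    rw [← Unitary.conjStarAlgAut_apply (S := ℝ) (x := diagonal (RCLike.ofReal ∘ hH.eigenvalues)),
      ← hH.spectral_theorem]
    congr 1
    rw [mul_one]
    exact ((Matrix.mem_unitaryGroup_iff).mp hH.eigenvectorUnitary.2).symm
  rw [h1, det_mul, det_mul, mul_comm, ← mul_assoc, ← det_mul,
    (Matrix.mem_unitaryGroup_iff').mp hH.eigenvectorUnitary.2, det_one, one_mul]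
  have : (1 : Matrix n n ℝ) + diagonal (RCLike.ofReal ∘ hH.eigenvalues) =
      diagonal (fun i => 1 + hH.eigenvalues i) := by
    rw [← diagonal_one, diagonal_add]
    rfl
  rw [this, det_diagonal]
  have hle : ∀ i ∈ Finset.univ, (1 : ℝ) ≤ 1 + hH.eigenvalues i := fun i _ =>
    le_add_of_nonneg_right (hQ.eigenvalues_nonneg i)
  calc (1:ℝ) = ∏ _i : n, 1 := by simp
    _ ≤ ∏ i : n, (1 + hH.eigenvalues i) := Finset.prod_le_prod (by simp) hle

lemma det_le_det_add_psd {A P : Matrix n n ℝ} (hA : A.PosSemidef) (hP : P.PosSemidef) :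
    A.det ≤ (A + P).det := by
  by_cases hd : A.det = 0
  · rw [hd]
    exact psd_det_nonneg (hA.add hP)
  · -- A is invertible; use its square root
    set S := CFC.sqrt A with hS
    have hSpsd : S.PosSemidef := (CFC.sqrt_nonneg A).posSemidef
    have hSS : S * S = A := CFC.sqrt_mul_sqrt_self A hA.nonneg
    have hdS : S.det ≠ 0 := by
      intro h
      apply hd
      rw [← hSS, det_mul, h, mul_zero]
    have hSinv : IsUnit S.det := hdS.isUnit
    have hSh : Sᴴ = S := hSpsd.isHermitian
    have hQ : (S⁻¹ * P * S⁻¹).PosSemidef := by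
      have := hP.conjTranspose_mul_mul_same (S⁻¹)
      rwa [conjTranspose_nonsing_inv, hSh] at this
    have key : A + P = S * (1 + S⁻¹ * P * S⁻¹) * S := by
      rw [mul_add, add_mul, mul_one, hSS]
      congr 1
      rw [← mul_assoc, ← mul_assoc, Matrix.mul_nonsing_inv _ hSinv, one_mul,
        mul_assoc, Matrix.nonsing_inv_mul _ hSinv, mul_one]
    rw [key, det_mul, det_mul, mul_comm, ← mul_assoc, ← det_mul, hSS]
    nth_rewrite 1 [← mul_one A.det]
    exact mul_le_mul_of_nonneg_left (one_le_det_one_add hQ) (psd_det_nonneg hA)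

end Aux

lemma dot_gram {H : Type*} [NormedAddCommGroup H] [InnerProductSpace ℝ H]
    {k : ℕ} (x : Fin k → H) (a : Fin k → ℝ) :
    a ⬝ᵥ (gramMatrix x) *ᵥ a = (inner ℝ (∑ i, a i • x i) (∑ j, a j • x j) : ℝ) := by
  simp only [dotProduct, mulVec, gramMatrix, of_apply, sum_inner, inner_sum,
    real_inner_smul_left, real_inner_smul_right, dotProduct]
  congr 1
  ext i
  rw [Finset.mul_sum]
  congr 1
  ext j
  rw [real_inner_comm (x i) (x j)]
  ring

lemma gram_isHermitian {H : Type*} [NormedAddCommGroup H] [InnerProductSpace ℝ H]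
    {k : ℕ} (x : Fin k → H) : (gramMatrix x).IsHermitian := by
  ext i j
  simp [gramMatrix, conjTranspose_apply, real_inner_comm]

lemma gram_posSemidef {H : Type*} [NormedAddCommGroup H] [InnerProductSpace ℝ H]
    {k : ℕ} (x : Fin k → H) : (gramMatrix x).PosSemidef := by
  refine .of_dotProduct_mulVec_nonneg (gram_isHermitian x) fun a => ?_
  have := dot_gram x a
  simp only [star_trivial] at *
  rw [this]
  exact real_inner_self_nonneg

theorem gram_det_bounded_operator {H₁ H₂ : Type*}
    [NormedAddCommGroup H₁] [InnerProductSpace ℝ H₁]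
    [NormedAddCommGroup H₂] [InnerProductSpace ℝ H₂]
    (T : H₁ →L[ℝ] H₂) {k : ℕ} (x : Fin k → H₁) :
    (gramMatrix fun i => T (x i)).det ≤ ‖T‖ ^ (2 * k) * (gramMatrix x).det := by
  set A := gramMatrix fun i => T (x i)
  set B := (‖T‖ ^ 2) • gramMatrix x
  have hP : (B - A).PosSemidef := by
    refine .of_dotProduct_mulVec_nonneg ?_ ?_
    · have h1 := gram_isHermitian fun i => T (x i)
      have h2 := gram_isHermitian x
      unfold A B
      ext i j
      simp only [conjTranspose_apply, Matrix.sub_apply, Matrix.smul_apply, smul_eq_mul, star_trivial]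
      rw [show (gramMatrix x) j i = (gramMatrix x) i j from congrFun (congrFun h2 i) j,
        show (gramMatrix fun i => T (x i)) j i = (gramMatrix fun i => T (x i)) i j from
          congrFun (congrFun h1 i) j]
    · intro a
      simp only [star_trivial, A, B, sub_mulVec, dotProduct_sub, smul_mulVec,
        dotProduct_smul]
      have hA := dot_gram (fun i => T (x i)) a
      have hB := dot_gram x a
      rw [hA, hB]
      set y := ∑ i, a i • x i
      have hy : ∑ i, a i • T (x i) = T y := by
        unfold y
        rw [map_sum]
        simp
      rw [hy]
      rw [real_inner_self_eq_norm_sq, real_inner_self_eq_norm_sq]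
      have h1 : ‖T y‖ ≤ ‖T‖ * ‖y‖ := T.le_opNorm y
      have h2 : ‖T y‖ ^ 2 ≤ (‖T‖ * ‖y‖) ^ 2 :=
        pow_le_pow_left₀ (norm_nonneg _) h1 2
      simp only [smul_eq_mul, mul_pow] at *
      linarith
  have hAp : A.PosSemidef := gram_posSemidef _
  have := det_le_det_add_psd hAp hP
  rw [add_sub_cancel] at this
  calc A.det ≤ B.det := this
    _ = ‖T‖ ^ (2 * k) * (gramMatrix x).det := by
        unfold B
        rw [det_smul, Fintype.card_fin, ← pow_mul]
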